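/- Under the consensus protocol x[k+1] = (I - εL)x[k], where L is the Laplacian of a connected undirected graph and 0 < ε < 1/d_max (d_max the maximum degree), the disagreement function z_k = x[k]ᵀ L_c x[k], with L_c the Laplacian of the complete graph on n vertices, is nonincreasing in k: z_{k+1} ≤ z_k for all k. -/

import Mathlib

open Matrix Finset

lemma quadform_eq (m : ℕ) (H : SimpleGraph (Fin m)) [DecidableRel H.Adj] (v : Fin m → ℝ) :
    v ⬝ᵥ (H.lapMatrix ℝ *ᵥ v) =
      (∑ i, ∑ j, if H.Adj i j then (v i - v j)^2 else 0) / 2 := by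
  rw [← Matrix.toLinearMap₂'_apply', SimpleGraph.lapMatrix_toLinearMap₂']

lemma lap_mulVec_sq_le (m : ℕ) (H : SimpleGraph (Fin m)) [DecidableRel H.Adj]
    (d : ℕ) (hd : ∀ i, H.degree i ≤ d) (v : Fin m → ℝ) :
    (H.lapMatrix ℝ *ᵥ v) ⬝ᵥ (H.lapMatrix ℝ *ᵥ v) ≤
      (2 * d) * (v ⬝ᵥ (H.lapMatrix ℝ *ᵥ v)) := by
  have key : ∀ i, ((H.lapMatrix ℝ *ᵥ v) i)^2 ≤
      d * ∑ j ∈ H.neighborFinset i, (v i - v j)^2 := by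
    intro i
    have h1 : (H.lapMatrix ℝ *ᵥ v) i = ∑ j ∈ H.neighborFinset i, (v i - v j) := by
      rw [SimpleGraph.lapMatrix_mulVec_apply, Finset.sum_sub_distrib, Finset.sum_const,
        SimpleGraph.card_neighborFinset_eq_degree, nsmul_eq_mul]
    rw [h1]
    calc (∑ j ∈ H.neighborFinset i, (v i - v j))^2
        ≤ (H.neighborFinset i).card * ∑ j ∈ H.neighborFinset i, (v i - v j)^2 :=
          sq_sum_le_card_mul_sum_sq
      _ ≤ d * ∑ j ∈ H.neighborFinset i, (v i - v j)^2 := by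
          exact mul_le_mul_of_nonneg_right (Nat.cast_le.mpr (hd i)) (by positivity)
  have h2 : (H.lapMatrix ℝ *ᵥ v) ⬝ᵥ (H.lapMatrix ℝ *ᵥ v) =
      ∑ i, ((H.lapMatrix ℝ *ᵥ v) i)^2 := by
    simp [dotProduct, sq]
  rw [h2, quadform_eq]
  have h3 : ∀ i : Fin m, ∑ j ∈ H.neighborFinset i, (v i - v j)^2 =
      ∑ j, if H.Adj i j then (v i - v j)^2 else 0 := by
    intro i
    rw [SimpleGraph.neighborFinset_eq_filter, Finset.sum_filter]
  calc ∑ i, ((H.lapMatrix ℝ *ᵥ v) i)^2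
      ≤ ∑ i, (d : ℝ) * ∑ j ∈ H.neighborFinset i, (v i - v j)^2 :=
        Finset.sum_le_sum fun i _ => key i
    _ = (2 * d) * ((∑ i, ∑ j, if H.Adj i j then (v i - v j)^2 else 0) / 2) := by
        simp_rw [h3]; rw [← Finset.mul_sum]; ring

lemma sum_lap_mulVec (m : ℕ) (H : SimpleGraph (Fin m)) [DecidableRel H.Adj] (v : Fin m → ℝ) :
    ∑ i, (H.lapMatrix ℝ *ᵥ v) i = 0 := by
  have : ∑ i, (H.lapMatrix ℝ *ᵥ v) i = (fun _ => (1:ℝ)) ⬝ᵥ (H.lapMatrix ℝ *ᵥ v) := by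
    simp [dotProduct]
  rw [this, Matrix.dotProduct_mulVec, ← Matrix.mulVec_transpose,
    Matrix.IsSymm.eq (SimpleGraph.isSymm_lapMatrix (R := ℝ) (G := H)),
    SimpleGraph.lapMatrix_mulVec_const_eq_zero, zero_dotProduct]

theorem consensus_disagreement_nonincreasing
    (n : ℕ) (G : SimpleGraph (Fin n)) [DecidableRel G.Adj]
    (hconn : G.Connected)
    (ε : ℝ) (hε0 : 0 < ε)
    (hε1 : ε < 1 / ((Finset.univ.sup fun v => G.degree v : ℕ) : ℝ))
    (x : ℕ → Fin n → ℝ)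
    (hdyn : ∀ k, x (k + 1) =
      ((1 : Matrix (Fin n) (Fin n) ℝ) - ε • G.lapMatrix ℝ) *ᵥ x k) :
    ∀ k, x (k + 1) ⬝ᵥ ((⊤ : SimpleGraph (Fin n)).lapMatrix ℝ *ᵥ x (k + 1))
        ≤ x k ⬝ᵥ ((⊤ : SimpleGraph (Fin n)).lapMatrix ℝ *ᵥ x k) := by
  intro k
  set d : ℕ := Finset.univ.sup fun v => G.degree v with hdd
  by_cases hd0 : d = 0
  · rw [hd0] at hε1
    simp at hε1
    linarith
  have hdpos : (0:ℝ) < d := by exact_mod_cast Nat.pos_of_ne_zero hd0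
  have hεd : ε * d < 1 := by
    rw [lt_div_iff₀ hdpos] at hε1
    linarith
  -- the top quadratic form identity
  have top_id : ∀ u : Fin n → ℝ,
      u ⬝ᵥ ((⊤ : SimpleGraph (Fin n)).lapMatrix ℝ *ᵥ u) =
        n * (u ⬝ᵥ u) - (∑ i, u i)^2 := by
    intro u
    rw [quadform_eq]
    have h1 : ∀ i j : Fin n,
        (if (⊤ : SimpleGraph (Fin n)).Adj i j then (u i - u j)^2 else 0)
          = (u i - u j)^2 := by
      intro i j
      by_cases h : i = j
      · simp [h]
      · simp [h]
    have e1 : ∀ i, ∑ j, (u i - u j)^2 =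
        n * (u i)^2 - 2 * u i * (∑ j, u j) + ∑ j, (u j)^2 := by
      intro i
      simp_rw [sub_sq]
      rw [Finset.sum_add_distrib, Finset.sum_sub_distrib, Finset.sum_const,
        Finset.card_univ, Fintype.card_fin, nsmul_eq_mul, ← Finset.mul_sum]
    simp_rw [h1, e1]
    rw [Finset.sum_add_distrib, Finset.sum_sub_distrib, ← Finset.mul_sum,
      Finset.sum_const, Finset.card_univ, Fintype.card_fin, nsmul_eq_mul]
    have e2 : ∑ i, 2 * u i * (∑ j, u j) = 2 * (∑ i, u i)^2 := by
      rw [← Finset.sum_mul, ← Finset.mul_sum]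
      ring
    have e3 : u ⬝ᵥ u = ∑ i, (u i)^2 := by simp [dotProduct, sq]
    rw [e2, e3]
    ring

  set v := x k with hv
  set w := G.lapMatrix ℝ *ᵥ v with hw
  have hstep : x (k+1) = v - ε • w := by
    rw [hdyn k, Matrix.sub_mulVec, Matrix.one_mulVec, Matrix.smul_mulVec]
  have hsum : ∑ i, x (k+1) i = ∑ i, v i := by
    rw [hstep]
    simp only [Pi.sub_apply, Pi.smul_apply, smul_eq_mul, Finset.sum_sub_distrib,
      ← Finset.mul_sum]
    rw [sum_lap_mulVec n G v]
    ring
  have hvw : 0 ≤ v ⬝ᵥ w := by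
    rw [hw, quadform_eq]
    positivity
  have hww : w ⬝ᵥ w ≤ (2 * d) * (v ⬝ᵥ w) := by
    rw [hw]
    exact lap_mulVec_sq_le n G d (fun i => hdd ▸ Finset.le_sup (f := fun v => G.degree v) (Finset.mem_univ i)) v
  have hwv : w ⬝ᵥ v = v ⬝ᵥ w := dotProduct_comm w v
  have hnorm : x (k+1) ⬝ᵥ x (k+1) ≤ v ⬝ᵥ v := by
    rw [hstep]
    rw [sub_dotProduct, dotProduct_sub, dotProduct_sub,
      smul_dotProduct, dotProduct_smul, smul_dotProduct,
      dotProduct_smul, hwv]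
    simp only [smul_eq_mul]
    nlinarith [mul_nonneg hε0.le hvw, mul_le_mul_of_nonneg_left hww
      (mul_nonneg hε0.le hε0.le), sq_nonneg ε]
  rw [top_id, top_id, hsum]
  have : (n:ℝ) * (x (k+1) ⬝ᵥ x (k+1)) ≤ n * (v ⬝ᵥ v) :=
    mul_le_mul_of_nonneg_left hnorm (Nat.cast_nonneg n)
  linarith
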